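/- Let R be a commutative ring, ε ∈ R with ε² = 1, S an associative R-algebra, and Q₀, Q₁, Q₂, Q₃ ∈ S satisfying the A1_ε relations. With b₀ = 1, b₁ = ε, b₂ = b₃ = 1, phase P(μ,ν) = −1 if μ ≠ ν and μ,ν ∈ {1,2,3} and P(μ,ν) = 1 otherwise, c := Q₀² + ε·Q₁² + Q₂² + Q₃², and y := c − Q₀², one has for every natural number n: Σ over μ ∈ {0,1,2,3} and all functions ν : {1,…,n} → {0,1,2,3} of b_μ · (Π_{i=1}^n b_{ν(i)}) · (Π_{i=1}^n P(μ,ν(i))) · Q_μ · Q_{ν(1)} Q_{ν(2)} ⋯ Q_{ν(n)} · Q_μ · Q_{ν(n)} ⋯ Q_{ν(2)} Q_{ν(1)} = c^{n+1} − (c^n − (c−ε)^n)·y. -/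

import Mathlib

/-- Diagonal entries `b₀ = 1, b₁ = ε, b₂ = b₃ = 1` of the inverse bilinear form
`C = diag(1,ε,1,1)` of `A1_ε`. -/
def bC {R : Type*} [CommRing R] (ε : R) : Fin 4 → R := ![1, ε, 1, 1]

/-- Grading phase: `P(μ,ν) = −1` if `μ ≠ ν` and both `μ, ν ∈ {1,2,3}`,
otherwise `P(μ,ν) = 1`. -/
def phC {R : Type*} [CommRing R] (μ ν : Fin 4) : R :=
  if μ ≠ ν ∧ μ ≠ 0 ∧ ν ≠ 0 then -1 else 1

section Aux

variable {R : Type*} [CommRing R] {S : Type*} [Ring S] [Algebra R S]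

/-- The Casimir-type element `c` is central among the `Q μ`. -/
lemma A1eps_central (ε : R) (Q : Fin 4 → S)
    (h01 : Q 0 * Q 1 = Q 1 * Q 0)
    (h02 : Q 0 * Q 2 = Q 2 * Q 0)
    (h03 : Q 0 * Q 3 = Q 3 * Q 0)
    (h12 : Q 1 * Q 2 + Q 2 * Q 1 = Q 3)
    (h23 : Q 2 * Q 3 + Q 3 * Q 2 = (algebraMap R S ε) * Q 1)
    (h31 : Q 3 * Q 1 + Q 1 * Q 3 = Q 2) :
    ∀ μ : Fin 4, (Q 0 ^ 2 + (algebraMap R S ε) * Q 1 ^ 2 + Q 2 ^ 2 + Q 3 ^ 2) * Q μ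
      = Q μ * (Q 0 ^ 2 + (algebraMap R S ε) * Q 1 ^ 2 + Q 2 ^ 2 + Q 3 ^ 2) := by
  set e : S := algebraMap R S ε with he
  have hcen : ∀ x : S, x * e = e * x := fun x => (Algebra.commutes ε x).symm
  intro μ; fin_cases μ <;>
    simp only [Fin.isValue, Fin.zero_eta, Fin.mk_one, Fin.reduceFinMk]
  · linear_combination (norm := noncomm_ring)
      -e * (Q 1 * h01 + h01 * Q 1) - hcen (Q 0) * Q 1 ^ 2
      - (Q 2 * h02 + h02 * Q 2) - (Q 3 * h03 + h03 * Q 3)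
  · linear_combination (norm := noncomm_ring)
      Q 0 * h01 + h01 * Q 0 - hcen (Q 1) * Q 1 ^ 2
      + Q 2 * h12 - h12 * Q 2 + Q 3 * h31 - h31 * Q 3
  · linear_combination (norm := noncomm_ring)
      Q 0 * h02 + h02 * Q 0 + e * (Q 1 * h12 - h12 * Q 1) - hcen (Q 2) * Q 1 ^ 2
      + Q 3 * h23 - h23 * Q 3 + hcen (Q 3) * Q 1
  · linear_combination (norm := noncomm_ring)
      Q 0 * h03 + h03 * Q 0 + e * (Q 1 * h31 - h31 * Q 1) - hcen (Q 3) * Q 1 ^ 2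
      + Q 2 * h23 - h23 * Q 2 + hcen (Q 2) * Q 1

/-- Contraction of a single chord across the `μ`-chord. -/
lemma A1eps_key (ε : R) (Q : Fin 4 → S)
    (h01 : Q 0 * Q 1 = Q 1 * Q 0)
    (h02 : Q 0 * Q 2 = Q 2 * Q 0)
    (h03 : Q 0 * Q 3 = Q 3 * Q 0)
    (h12 : Q 1 * Q 2 + Q 2 * Q 1 = Q 3)
    (h23 : Q 2 * Q 3 + Q 3 * Q 2 = (algebraMap R S ε) * Q 1)
    (h31 : Q 3 * Q 1 + Q 1 * Q 3 = Q 2) :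
    ∀ μ : Fin 4, (∑ a : Fin 4, (bC ε a * phC (R := R) μ a) • (Q a * Q μ * Q a))
      = (if μ = 0 then (Q 0 ^ 2 + (algebraMap R S ε) * Q 1 ^ 2 + Q 2 ^ 2 + Q 3 ^ 2)
          else (Q 0 ^ 2 + (algebraMap R S ε) * Q 1 ^ 2 + Q 2 ^ 2 + Q 3 ^ 2)
            - algebraMap R S ε) * Q μ := by
  set e : S := algebraMap R S ε with he
  have hcen : ∀ x : S, x * e = e * x := fun x => (Algebra.commutes ε x).symm
  have hsm : ∀ x : S, ε • x = e * x := fun x => Algebra.smul_def ε x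
  intro μ; fin_cases μ <;>
    simp only [Fin.isValue, Fin.zero_eta, Fin.mk_one, Fin.reduceFinMk] <;>
    simp only [Fin.sum_univ_four, hsm,
      show bC ε 0 = 1 from rfl, show bC ε 1 = ε from rfl,
      show bC ε 2 = 1 from rfl, show bC ε 3 = 1 from rfl,
      show phC (R := R) 0 0 = 1 from rfl, show phC (R := R) 0 1 = 1 from rfl,
      show phC (R := R) 0 2 = 1 from rfl, show phC (R := R) 0 3 = 1 from rfl,
      show phC (R := R) 1 0 = 1 from rfl, show phC (R := R) 1 1 = 1 from rfl,
      show phC (R := R) 1 2 = -1 from rfl, show phC (R := R) 1 3 = -1 from rfl,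
      show phC (R := R) 2 0 = 1 from rfl, show phC (R := R) 2 1 = -1 from rfl,
      show phC (R := R) 2 2 = 1 from rfl, show phC (R := R) 2 3 = -1 from rfl,
      show phC (R := R) 3 0 = 1 from rfl, show phC (R := R) 3 1 = -1 from rfl,
      show phC (R := R) 3 2 = -1 from rfl, show phC (R := R) 3 3 = 1 from rfl,
      one_mul, mul_one, mul_neg, neg_smul, one_smul, neg_mul, if_true, if_false,
      show ((0 : Fin 4) = 0) = True by simp, show ((1 : Fin 4) = 0) = False by simp,
      show ((2 : Fin 4) = 0) = False by simp, show ((3 : Fin 4) = 0) = False by simp]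
  · linear_combination (norm := noncomm_ring) e * (Q 1 * h01) + Q 2 * h02 + Q 3 * h03
  · linear_combination (norm := noncomm_ring) -(Q 0 * h01) - Q 2 * h12 - Q 3 * h31 - h23
  · linear_combination (norm := noncomm_ring)
      -(Q 0 * h02) - e * (Q 1 * h12) - Q 3 * h23 - e * h31 - hcen (Q 3) * Q 1
  · linear_combination (norm := noncomm_ring)
      -(Q 0 * h03) - e * (Q 1 * h31) - Q 2 * h23 - e * h12 - hcen (Q 2) * Q 1

/-- The per-`μ` weight, computed by induction on `n`. -/
lemma A1eps_main (ε : R) (Q : Fin 4 → S)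
    (h01 : Q 0 * Q 1 = Q 1 * Q 0)
    (h02 : Q 0 * Q 2 = Q 2 * Q 0)
    (h03 : Q 0 * Q 3 = Q 3 * Q 0)
    (h12 : Q 1 * Q 2 + Q 2 * Q 1 = Q 3)
    (h23 : Q 2 * Q 3 + Q 3 * Q 2 = (algebraMap R S ε) * Q 1)
    (h31 : Q 3 * Q 1 + Q 1 * Q 3 = Q 2) (μ : Fin 4) :
    ∀ n : ℕ,
      (∑ ν : Fin n → Fin 4,
          ((∏ i : Fin n, bC ε (ν i)) * ∏ i : Fin n, phC (R := R) μ (ν i)) •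
            (Q μ * (List.ofFn fun i => Q (ν i)).prod * Q μ *
              ((List.ofFn fun i => Q (ν i)).reverse.prod)))
      = (if μ = 0 then (Q 0 ^ 2 + (algebraMap R S ε) * Q 1 ^ 2 + Q 2 ^ 2 + Q 3 ^ 2)
          else (Q 0 ^ 2 + (algebraMap R S ε) * Q 1 ^ 2 + Q 2 ^ 2 + Q 3 ^ 2)
            - algebraMap R S ε) ^ n * Q μ ^ 2 := by
  set e : S := algebraMap R S ε with he
  set c : S := Q 0 ^ 2 + e * Q 1 ^ 2 + Q 2 ^ 2 + Q 3 ^ 2 with hc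
  set lam : S := if μ = 0 then c else c - e with hlam
  have hCc : ∀ j, Commute c (Q j) := fun j =>
    A1eps_central ε Q h01 h02 h03 h12 h23 h31 j
  have hCe : ∀ j, Commute e (Q j) := fun j => Algebra.commutes ε (Q j)
  have hCl : ∀ j, Commute lam (Q j) := fun j => by
    rw [hlam]; split
    · exact hCc j
    · exact (hCc j).sub_left (hCe j)
  have hCp : ∀ {m : ℕ} (g : Fin m → Fin 4),
      Commute lam ((List.ofFn fun i => Q (g i)).prod) := by
    intro m g
    refine Commute.list_prod_right _ _ fun x hx => ?_
    obtain ⟨i, rfl⟩ := List.mem_ofFn.1 hx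
    exact hCl _
  have hCr : ∀ {m : ℕ} (g : Fin m → Fin 4),
      Commute lam ((List.ofFn fun i => Q (g i)).reverse.prod) := by
    intro m g
    refine Commute.list_prod_right _ _ fun x hx => ?_
    obtain ⟨i, rfl⟩ := List.mem_ofFn.1 (List.mem_reverse.1 hx)
    exact hCl _
  intro n
  induction n with
  | zero =>
      simp [Finset.sum_const, pow_two, mul_assoc]
  | succ n ih =>
      rw [← Equiv.sum_comp (Fin.snocEquiv (fun _ => Fin 4))]
      rw [Fintype.sum_prod_type, Finset.sum_comm]
      have step1 : ∀ (g : Fin n → Fin 4), (∑ a : Fin 4,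
          ((∏ i : Fin (n + 1), bC ε ((Fin.snocEquiv (fun _ => Fin 4)) (a, g) i)) *
              ∏ i : Fin (n + 1), phC (R := R) μ ((Fin.snocEquiv (fun _ => Fin 4)) (a, g) i)) •
            (Q μ * (List.ofFn fun i => Q ((Fin.snocEquiv (fun _ => Fin 4)) (a, g) i)).prod * Q μ *
              ((List.ofFn fun i => Q ((Fin.snocEquiv (fun _ => Fin 4)) (a, g) i)).reverse.prod)))
          = ((∏ i : Fin n, bC ε (g i)) * ∏ i : Fin n, phC (R := R) μ (g i)) •
              (lam * (Q μ * (List.ofFn fun i => Q (g i)).prod * Q μ *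
                ((List.ofFn fun i => Q (g i)).reverse.prod))) := by
        intro g
        simp only [Fin.snocEquiv_apply, Fin.prod_univ_castSucc, Fin.snoc_castSucc,
          Fin.snoc_last, List.ofFn_succ', List.concat_eq_append, List.prod_append,
          List.prod_cons, List.prod_nil, List.reverse_append, List.reverse_cons,
          List.reverse_nil, List.nil_append, List.cons_append, mul_one, one_mul]
        have expand : ∀ a : Fin 4,
            (((∏ i : Fin n, bC ε (g i)) * bC ε a) *
                ((∏ i : Fin n, phC (R := R) μ (g i)) * phC (R := R) μ a)) •
              (Q μ * ((List.ofFn fun i => Q (g i)).prod * Q a) * Q μ *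
                (Q a * (List.ofFn fun i => Q (g i)).reverse.prod))
            = ((∏ i : Fin n, bC ε (g i)) * ∏ i : Fin n, phC (R := R) μ (g i)) •
                ((bC ε a * phC (R := R) μ a) •
                  (Q μ * (List.ofFn fun i => Q (g i)).prod *
                    (Q a * Q μ * Q a) *
                    (List.ofFn fun i => Q (g i)).reverse.prod)) := by
          intro a
          rw [smul_smul]
          congr 1
          · ring
          · noncomm_ring
        calc _ = ∑ a : Fin 4,
              ((∏ i : Fin n, bC ε (g i)) * ∏ i : Fin n, phC (R := R) μ (g i)) •
                ((bC ε a * phC (R := R) μ a) •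
                  (Q μ * (List.ofFn fun i => Q (g i)).prod *
                    (Q a * Q μ * Q a) *
                    (List.ofFn fun i => Q (g i)).reverse.prod)) := by
              exact Finset.sum_congr rfl fun a _ => expand a
          _ = ((∏ i : Fin n, bC ε (g i)) * ∏ i : Fin n, phC (R := R) μ (g i)) •
              (Q μ * (List.ofFn fun i => Q (g i)).prod *
                (∑ a : Fin 4, (bC ε a * phC (R := R) μ a) • (Q a * Q μ * Q a)) *
                (List.ofFn fun i => Q (g i)).reverse.prod) := by
              rw [← Finset.smul_sum]
              congr 1
              rw [Finset.mul_sum, Finset.sum_mul]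
              exact Finset.sum_congr rfl fun a _ => by
                rw [mul_smul_comm, smul_mul_assoc]
          _ = ((∏ i : Fin n, bC ε (g i)) * ∏ i : Fin n, phC (R := R) μ (g i)) •
              (lam * (Q μ * (List.ofFn fun i => Q (g i)).prod * Q μ *
                ((List.ofFn fun i => Q (g i)).reverse.prod))) := by
              rw [A1eps_key ε Q h01 h02 h03 h12 h23 h31 μ]
              rw [← he, ← hc, ← hlam]
              congr 1
              have hc1 : Commute lam (Q μ * (List.ofFn fun i => Q (g i)).prod) :=
                (hCl μ).mul_right (hCp g)
              linear_combination (norm := noncomm_ring)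
                -(hc1.eq * (Q μ * (List.ofFn fun i => Q (g i)).reverse.prod))
      calc _ = ∑ g : Fin n → Fin 4,
            ((∏ i : Fin n, bC ε (g i)) * ∏ i : Fin n, phC (R := R) μ (g i)) •
              (lam * (Q μ * (List.ofFn fun i => Q (g i)).prod * Q μ *
                ((List.ofFn fun i => Q (g i)).reverse.prod))) :=
          Finset.sum_congr rfl fun g _ => step1 g
        _ = lam * ∑ g : Fin n → Fin 4,
            ((∏ i : Fin n, bC ε (g i)) * ∏ i : Fin n, phC (R := R) μ (g i)) •
              (Q μ * (List.ofFn fun i => Q (g i)).prod * Q μ *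
                ((List.ofFn fun i => Q (g i)).reverse.prod)) := by
            rw [Finset.mul_sum]
            exact Finset.sum_congr rfl fun g _ => (mul_smul_comm _ _ _).symm
        _ = lam ^ (n + 1) * Q μ ^ 2 := by
            rw [ih, ← mul_assoc, ← pow_succ']

end Aux

/-- **Weight of the chord diagram `D_n`** (one chord crossed by `n` mutually
non-intersecting parallel chords, endpoint pattern `μ ν₁ … ν_n μ ν_n … ν₁`):
for every `n`,
`Σ_{μ, ν} b_μ (Π_i b_{ν i}) (Π_i P(μ, ν i)) · Q_μ Q_{ν 1} ⋯ Q_{ν n} Q_μ Q_{ν n} ⋯ Q_{ν 1}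
 = c^{n+1} − (c^n − (c−ε)^n)·y`. -/
theorem A1eps_Dn_weight
    {R : Type*} [CommRing R] {S : Type*} [Ring S] [Algebra R S]
    (ε : R) (hε : ε ^ 2 = 1)
    (Q : Fin 4 → S)
    (h01 : Q 0 * Q 1 = Q 1 * Q 0)
    (h02 : Q 0 * Q 2 = Q 2 * Q 0)
    (h03 : Q 0 * Q 3 = Q 3 * Q 0)
    (h12 : Q 1 * Q 2 + Q 2 * Q 1 = Q 3)
    (h23 : Q 2 * Q 3 + Q 3 * Q 2 = ε • Q 1)
    (h31 : Q 3 * Q 1 + Q 1 * Q 3 = Q 2) :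
    ∀ n : ℕ,
      (∑ μ : Fin 4, ∑ ν : Fin n → Fin 4,
          (bC ε μ * (∏ i : Fin n, bC ε (ν i)) * ∏ i : Fin n, phC (R := R) μ (ν i)) •
            (Q μ * (List.ofFn fun i => Q (ν i)).prod * Q μ *
              ((List.ofFn fun i => Q (ν i)).reverse.prod)))
        = (Q 0 ^ 2 + ε • Q 1 ^ 2 + Q 2 ^ 2 + Q 3 ^ 2) ^ (n + 1)
          - ((Q 0 ^ 2 + ε • Q 1 ^ 2 + Q 2 ^ 2 + Q 3 ^ 2) ^ n
              - ((Q 0 ^ 2 + ε • Q 1 ^ 2 + Q 2 ^ 2 + Q 3 ^ 2) - ε • (1 : S)) ^ n) *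
            ((Q 0 ^ 2 + ε • Q 1 ^ 2 + Q 2 ^ 2 + Q 3 ^ 2) - Q 0 ^ 2) := by
  have hsm : ∀ x : S, ε • x = algebraMap R S ε * x := fun x => Algebra.smul_def ε x
  set e : S := algebraMap R S ε with he
  have h23' : Q 2 * Q 3 + Q 3 * Q 2 = e * Q 1 := by rw [h23, hsm]
  intro n
  have main := A1eps_main ε Q h01 h02 h03 h12 h23' h31
  calc _ = ∑ μ : Fin 4, bC ε μ •
        ((if μ = 0 then (Q 0 ^ 2 + e * Q 1 ^ 2 + Q 2 ^ 2 + Q 3 ^ 2)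
          else (Q 0 ^ 2 + e * Q 1 ^ 2 + Q 2 ^ 2 + Q 3 ^ 2) - e) ^ n * Q μ ^ 2) := by
        refine Finset.sum_congr rfl fun μ _ => ?_
        rw [← main μ n, Finset.smul_sum]
        refine Finset.sum_congr rfl fun ν _ => ?_
        rw [smul_smul, mul_assoc]
    _ = _ := by
        simp only [Fin.sum_univ_four,
          show bC ε 0 = 1 from rfl, show bC ε 1 = ε from rfl,
          show bC ε 2 = 1 from rfl, show bC ε 3 = 1 from rfl,
          show ((0 : Fin 4) = 0) = True by simp, show ((1 : Fin 4) = 0) = False by simp,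
          show ((2 : Fin 4) = 0) = False by simp, show ((3 : Fin 4) = 0) = False by simp,
          if_true, if_false, one_smul, hsm, mul_one]
        rw [pow_succ _ n]
        generalize ((Q 0 ^ 2 + e * Q 1 ^ 2 + Q 2 ^ 2 + Q 3 ^ 2) - e) ^ n = B
        generalize (Q 0 ^ 2 + e * Q 1 ^ 2 + Q 2 ^ 2 + Q 3 ^ 2) ^ n = A
        linear_combination (norm := noncomm_ring) (Algebra.commutes ε B) * Q 1 ^ 2
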